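/- Fix T > 0, σ ∈ ℝ, R ∈ (0,1], and let α(t) = λ e^{-ρ t} + (1-λ) e^{-γ t} with γ > ρ > 0 and λ ∈ (0,1). Then there exists a continuous function P : Δ[0,T] → ℝ, where Δ[0,T] = {(t,s) : 0 ≤ t ≤ s ≤ T}, such that for each fixed t ∈ [0,T] the map s ↦ P(t,s) is differentiable on [t,T] and satisfies the equilibrium Riccati equation ∂_s P(t,s) + (σ² - 2((1-R)/R) P(s,s)) P(t,s) + α(s-t) ((1-R)/R) P(s,s)² = 0 for all (t,s) ∈ Δ[0,T], with terminal condition P(t,T) = α(T-t) for all t ∈ [0,T]; moreover this solution satisfies P(t,s) ≥ 0 for all (t,s) ∈ Δ[0,T]. -/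

import Mathlib

open Real Set

/-- `P` (with `s`-partial derivative `Ps`) is a continuous solution, on
`Δ[0,T] = {(t,s) : 0 ≤ t ≤ s ≤ T}`, of the equilibrium Riccati equation
`∂ₛP(t,s) + (σ² - 2((1-R)/R) P(s,s)) P(t,s) + α(s-t) ((1-R)/R) P(s,s)² = 0`
with terminal condition `P(t,T) = α(T-t)`. -/
def IsERESolution (T σ R : ℝ) (α : ℝ → ℝ) (P Ps : ℝ → ℝ → ℝ) : Prop :=
  ContinuousOn (fun p : ℝ × ℝ => P p.1 p.2)
    {p : ℝ × ℝ | 0 ≤ p.1 ∧ p.1 ≤ p.2 ∧ p.2 ≤ T} ∧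
  (∀ t ∈ Set.Icc (0 : ℝ) T, ∀ s ∈ Set.Icc t T,
    HasDerivWithinAt (P t) (Ps t s) (Set.Icc t T) s ∧
    Ps t s + (σ ^ 2 - 2 * ((1 - R) / R) * P s s) * P t s
      + α (s - t) * (((1 - R) / R) * (P s s) ^ 2) = 0) ∧
  (∀ t ∈ Set.Icc (0 : ℝ) T, P t T = α (T - t))





noncomputable def clK (K x : ℝ) : ℝ := max 0 (min x K)

noncomputable def hbarF (l K : ℝ) (p : ℝ × ℝ) : ℝ := l * clK K p.1 + (1 - l) * clK K p.2

noncomputable def Fvec (σ ρ γ l c K : ℝ) (p : ℝ × ℝ) : ℝ × ℝ :=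
  (-((ρ - σ ^ 2) + 2 * c * hbarF l K p) * clK K p.1 + c * (hbarF l K p) ^ 2,
   -((γ - σ ^ 2) + 2 * c * hbarF l K p) * clK K p.2 + c * (hbarF l K p) ^ 2)

section clfacts
variable (K x : ℝ)

lemma clK_nonneg : 0 ≤ clK K x := le_max_left _ _

lemma clK_le (hK : 0 ≤ K) : clK K x ≤ K := max_le hK (min_le_right _ _)

lemma clK_eq (h0 : 0 ≤ x) (hK : x ≤ K) : clK K x = x := by
  unfold clK; rw [min_eq_left hK, max_eq_right h0]

lemma clK_eq_zero (h : x ≤ 0) : clK K x = 0 := by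
  unfold clK
  rcases le_total x K with h'|h'
  · rw [min_eq_left h', max_eq_left h]
  · have : K ≤ 0 := h'.trans h
    rw [min_eq_right h', max_eq_left this]

lemma clK_le_self (h : 0 ≤ x) : clK K x ≤ x := max_le h (min_le_left _ _)

lemma clK_lip (y : ℝ) : |clK K x - clK K y| ≤ |x - y| := by
  have h1 : |max 0 (min x K) - max 0 (min y K)| ≤ |min x K - min y K| := by
    have := abs_max_sub_max_le_abs (min x K) (min y K) 0
    simpa [max_comm] using this
  have h2 : |min x K - min y K| ≤ |x - y| := by
    rcases le_total x K with hx|hx <;> rcases le_total y K with hy|hy <;>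
      simp [min_eq_left, min_eq_right, hx, hy, abs_sub_le_iff] <;>
      constructor <;> cases' abs_sub_le_iff.1 (le_refl |x-y|) with a b <;>
      linarith [le_abs_self (x - y), neg_abs_le (x - y)]
  exact h1.trans h2

end clfacts

section hbarfacts
variable {l K : ℝ} (p : ℝ × ℝ) (hl0 : 0 ≤ l) (hl1 : l ≤ 1) (hK : 0 ≤ K)

include hl0 hl1 in
lemma hbarF_nonneg : 0 ≤ hbarF l K p := by
  have := clK_nonneg K p.1; have := clK_nonneg K p.2
  unfold hbarF; nlinarith

include hl0 hl1 hK in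
lemma hbarF_le : hbarF l K p ≤ K := by
  have := clK_le K p.1 hK; have := clK_le K p.2 hK
  have := clK_nonneg K p.1; have := clK_nonneg K p.2
  unfold hbarF; nlinarith

include hl0 hl1 in
lemma hbarF_lip (q : ℝ × ℝ) : |hbarF l K p - hbarF l K q| ≤ dist p q := by
  have hd1 : dist p.1 q.1 ≤ dist p q := by rw [Prod.dist_eq]; exact le_max_left _ _
  have hd2 : dist p.2 q.2 ≤ dist p q := by rw [Prod.dist_eq]; exact le_max_right _ _
  rw [Real.dist_eq] at hd1 hd2
  have h1 : |clK K p.1 - clK K q.1| ≤ dist p q := (clK_lip K p.1 q.1).trans hd1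
  have h2 : |clK K p.2 - clK K q.2| ≤ dist p q := (clK_lip K p.2 q.2).trans hd2
  have hrw : hbarF l K p - hbarF l K q
      = l * (clK K p.1 - clK K q.1) + (1 - l) * (clK K p.2 - clK K q.2) := by
    unfold hbarF; ring
  rw [hrw, abs_le]
  rw [abs_le] at h1 h2
  constructor <;> nlinarith [h1.1, h1.2, h2.1, h2.2]

end hbarfacts

/-- generic single-component Lipschitz estimate -/
lemma comp_lip {m c K a a' h h' d : ℝ} (hc : 0 ≤ c) (hK : 0 ≤ K)
    (ha : 0 ≤ a) (haK : a ≤ K) (ha' : 0 ≤ a') (ha'K : a' ≤ K)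
    (hh : 0 ≤ h) (hhK : h ≤ K) (hh' : 0 ≤ h') (hh'K : h' ≤ K)
    (hd1 : |a - a'| ≤ d) (hd2 : |h - h'| ≤ d) :
    |(-(m + 2 * c * h) * a + c * h ^ 2) - (-(m + 2 * c * h') * a' + c * h' ^ 2)|
      ≤ (|m| + 6 * c * K) * d := by
  have hd0 : 0 ≤ d := le_trans (abs_nonneg _) hd1
  have key : (-(m + 2 * c * h) * a + c * h ^ 2) - (-(m + 2 * c * h') * a' + c * h' ^ 2)
      = -(m * (a - a')) - 2 * c * h * (a - a') - 2 * c * a' * (h - h')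
        + c * (h + h') * (h - h') := by ring
  rw [key]
  have e1 : |m * (a - a')| ≤ |m| * d := by
    rw [abs_mul]; exact mul_le_mul_of_nonneg_left hd1 (abs_nonneg m)
  have e2 : |2 * c * h * (a - a')| ≤ 2 * c * K * d := by
    rw [abs_mul, abs_of_nonneg (by nlinarith : (0:ℝ) ≤ 2 * c * h)]
    exact mul_le_mul (by nlinarith) hd1 (abs_nonneg _) (by nlinarith)
  have e3 : |2 * c * a' * (h - h')| ≤ 2 * c * K * d := by
    rw [abs_mul, abs_of_nonneg (by nlinarith : (0:ℝ) ≤ 2 * c * a')]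
    exact mul_le_mul (by nlinarith) hd2 (abs_nonneg _) (by nlinarith)
  have e4 : |c * (h + h') * (h - h')| ≤ 2 * c * K * d := by
    rw [abs_mul, abs_of_nonneg (by nlinarith : (0:ℝ) ≤ c * (h + h'))]
    exact mul_le_mul (by nlinarith) hd2 (abs_nonneg _) (by nlinarith)
  calc |(-(m * (a - a')) - 2 * c * h * (a - a') - 2 * c * a' * (h - h'))
          + c * (h + h') * (h - h')|
      ≤ |(-(m * (a - a')) - 2 * c * h * (a - a') - 2 * c * a' * (h - h'))|
          + |c * (h + h') * (h - h')| := abs_add_le _ _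
    _ ≤ (|(-(m * (a - a')) - 2 * c * h * (a - a'))| + |2 * c * a' * (h - h')|)
          + |c * (h + h') * (h - h')| := by
          gcongr; exact abs_sub _ _
    _ ≤ ((|(-(m * (a - a')))| + |2 * c * h * (a - a')|) + |2 * c * a' * (h - h')|)
          + |c * (h + h') * (h - h')| := by
          gcongr; exact abs_sub _ _
    _ ≤ (((|m| * d) + 2 * c * K * d) + 2 * c * K * d) + 2 * c * K * d := by
          rw [abs_neg]; gcongr <;> assumption
    _ = (|m| + 6 * c * K) * d := by ring

lemma comp_bound {m c K a h : ℝ} (hc : 0 ≤ c) (hK : 0 ≤ K)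
    (ha : 0 ≤ a) (haK : a ≤ K) (hh : 0 ≤ h) (hhK : h ≤ K) :
    |(-(m + 2 * c * h) * a + c * h ^ 2)| ≤ (|m| + 2 * c * K) * K + c * K ^ 2 := by
  calc |(-(m + 2 * c * h) * a + c * h ^ 2)|
      ≤ |(-(m + 2 * c * h) * a)| + |c * h ^ 2| := abs_add_le _ _
    _ ≤ (|m| + 2 * c * K) * K + c * K ^ 2 := by
        have h1 : |(-(m + 2 * c * h) * a)| ≤ (|m| + 2 * c * K) * K := by
          rw [abs_mul, abs_neg, abs_of_nonneg ha]
          have hx : |m + 2 * c * h| ≤ |m| + 2 * c * K := by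
            refine (abs_add_le _ _).trans ?_
            rw [abs_of_nonneg (by nlinarith : (0:ℝ) ≤ 2 * c * h)]
            nlinarith
          exact mul_le_mul hx haK ha (by nlinarith [abs_nonneg m])
        have h2 : |c * h ^ 2| ≤ c * K ^ 2 := by
          rw [abs_of_nonneg (by nlinarith [sq_nonneg h] : (0:ℝ) ≤ c * h ^ 2)]
          nlinarith [mul_le_mul_of_nonneg_left (by nlinarith : h ^ 2 ≤ K ^ 2) hc]
        linarith





lemma nonneg_of_deriv_cond {T : ℝ} {f f' : ℝ → ℝ} (hT : 0 ≤ T)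
    (hc : ContinuousOn f (Icc 0 T))
    (hd : ∀ τ ∈ Icc (0:ℝ) T, HasDerivWithinAt f (f' τ) (Icc 0 T) τ)
    (h0 : 0 ≤ f 0)
    (hpos : ∀ τ ∈ Icc (0:ℝ) T, f τ ≤ 0 → 0 ≤ f' τ) :
    ∀ τ ∈ Icc (0:ℝ) T, 0 ≤ f τ := by
  by_contra hcon
  push_neg at hcon
  obtain ⟨τ₀, hτ₀, hfτ₀⟩ := hcon
  set S : Set ℝ := Icc 0 τ₀ ∩ f ⁻¹' (Ici 0) with hSdef
  have hS0 : (0:ℝ) ∈ S := ⟨⟨le_refl _, hτ₀.1⟩, h0⟩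
  have hSbdd : BddAbove S := ⟨τ₀, fun τ hτ => hτ.1.2⟩
  have hsub0 : Icc (0:ℝ) τ₀ ⊆ Icc 0 T := Icc_subset_Icc le_rfl hτ₀.2
  have hSclosed : IsClosed S :=
    (hc.mono hsub0).preimage_isClosed_of_isClosed isClosed_Icc isClosed_Ici
  set τ₁ := sSup S with hτ₁def
  have hτ₁S : τ₁ ∈ S := hSclosed.csSup_mem ⟨0, hS0⟩ hSbdd
  have hτ₁le : τ₁ ≤ τ₀ := hτ₁S.1.2
  have hτ₁0 : 0 ≤ τ₁ := hτ₁S.1.1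
  have hfτ₁ : 0 ≤ f τ₁ := hτ₁S.2
  have hlt : τ₁ < τ₀ := by
    rcases lt_or_eq_of_le hτ₁le with h|h
    · exact h
    · rw [h] at hfτ₁; linarith
  have hneg : ∀ τ ∈ Ioc τ₁ τ₀, f τ < 0 := by
    intro τ hτ
    by_contra hge
    push_neg at hge
    have : τ ∈ S := ⟨⟨hτ₁0.trans hτ.1.le, hτ.2⟩, hge⟩
    exact absurd (le_csSup hSbdd this) (not_le.2 hτ.1)
  have hsub : Icc τ₁ τ₀ ⊆ Icc 0 T := Icc_subset_Icc hτ₁0 hτ₀.2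
  have hderivAt : ∀ τ ∈ Ioo τ₁ τ₀, HasDerivAt f (f' τ) τ := by
    intro τ hτ
    have hmemI : τ ∈ Icc (0:ℝ) T := hsub ⟨hτ.1.le, hτ.2.le⟩
    have hmem : Icc (0:ℝ) T ∈ nhds τ :=
      Icc_mem_nhds (lt_of_le_of_lt hτ₁0 hτ.1) (lt_of_lt_of_le hτ.2 hτ₀.2)
    exact (hd τ hmemI).hasDerivAt hmem
  have hmono : MonotoneOn f (Icc τ₁ τ₀) := by
    apply monotoneOn_of_deriv_nonneg (convex_Icc _ _) (hc.mono hsub)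
    · rw [interior_Icc]
      exact fun τ hτ => (hderivAt τ hτ).differentiableAt.differentiableWithinAt
    · rw [interior_Icc]
      intro τ hτ
      rw [(hderivAt τ hτ).deriv]
      exact hpos τ (hsub ⟨hτ.1.le, hτ.2.le⟩) (hneg τ ⟨hτ.1, hτ.2.le⟩).le
  have := hmono ⟨le_refl _, hτ₁le⟩ ⟨hτ₁le, le_refl _⟩ hτ₁le
  linarith

lemma gronwall_scalar {T δ K ε : ℝ} {f f' : ℝ → ℝ}
    (hc : ContinuousOn f (Icc 0 T))
    (hd : ∀ τ ∈ Icc (0:ℝ) T, HasDerivWithinAt f (f' τ) (Icc 0 T) τ)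
    (h0 : f 0 ≤ δ)
    (hb : ∀ τ ∈ Icc (0:ℝ) T, f' τ ≤ K * f τ + ε) :
    ∀ τ ∈ Icc (0:ℝ) T, f τ ≤ gronwallBound δ K ε τ := by
  intro τ hτ
  have h := le_gronwallBound_of_liminf_deriv_right_le hc
    (fun x hx r hr => ?_) h0 (fun x hx => hb x (Ico_subset_Icc_self hx)) τ hτ
  · simpa using h
  · have h1 : HasDerivWithinAt f (f' x) (Ici x) x := by
      apply (hd x (Ico_subset_Icc_self hx)).mono_of_mem_nhdsWithin
      apply mem_nhdsWithin.mpr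
      exact ⟨Iio T, isOpen_Iio, hx.2, fun z hz => ⟨hx.1.trans hz.2, hz.1.le⟩⟩
    have := h1.liminf_right_slope_le hr
    apply this.mono
    intro z hz
    rwa [slope_def_field, div_eq_inv_mul] at hz

lemma exists_ode_solution (σ ρ γ l c K T : ℝ) (hT : 0 < T) (hc : 0 ≤ c) (hK : 0 ≤ K)
    (hl0 : 0 ≤ l) (hl1 : l ≤ 1) :
    ∃ f : ℝ → ℝ × ℝ, f 0 = (1, 1) ∧
      ∀ τ ∈ Icc (0:ℝ) T, HasDerivWithinAt f (Fvec σ ρ γ l c K (f τ)) (Icc 0 T) τ := by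
  set L : ℝ := |ρ - σ ^ 2| + |γ - σ ^ 2| + 6 * c * K with hL
  have hL0 : 0 ≤ L := by
    have := abs_nonneg (ρ - σ ^ 2); have := abs_nonneg (γ - σ ^ 2); nlinarith
  set C : ℝ := (|ρ - σ ^ 2| + 2 * c * K) * K + (|γ - σ ^ 2| + 2 * c * K) * K
      + 2 * c * K ^ 2 + 1 with hC
  have hdists : ∀ p q : ℝ × ℝ, |p.1 - q.1| ≤ dist p q ∧ |p.2 - q.2| ≤ dist p q := by
    intro p q
    constructor
    · rw [← Real.dist_eq, Prod.dist_eq]; exact le_max_left _ _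
    · rw [← Real.dist_eq, Prod.dist_eq]; exact le_max_right _ _
  have hlip : ∀ p q : ℝ × ℝ, dist (Fvec σ ρ γ l c K p) (Fvec σ ρ γ l c K q) ≤ L * dist p q := by
    intro p q
    have hd0 : 0 ≤ dist p q := dist_nonneg
    rw [Prod.dist_eq]
    apply max_le <;> rw [Real.dist_eq] <;> unfold Fvec <;> simp only
    · have h1 := comp_lip (m := ρ - σ ^ 2) hc hK (clK_nonneg K p.1) (clK_le K p.1 hK)
        (clK_nonneg K q.1) (clK_le K q.1 hK) (hbarF_nonneg p hl0 hl1)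
        (hbarF_le p hl0 hl1 hK) (hbarF_nonneg q hl0 hl1) (hbarF_le q hl0 hl1 hK)
        ((clK_lip K p.1 q.1).trans (hdists p q).1) (hbarF_lip p hl0 hl1 q)
      refine h1.trans ?_
      have := abs_nonneg (γ - σ ^ 2)
      nlinarith
    · have h1 := comp_lip (m := γ - σ ^ 2) hc hK (clK_nonneg K p.2) (clK_le K p.2 hK)
        (clK_nonneg K q.2) (clK_le K q.2 hK) (hbarF_nonneg p hl0 hl1)
        (hbarF_le p hl0 hl1 hK) (hbarF_nonneg q hl0 hl1) (hbarF_le q hl0 hl1 hK)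
        ((clK_lip K p.2 q.2).trans (hdists p q).2) (hbarF_lip p hl0 hl1 q)
      refine h1.trans ?_
      have := abs_nonneg (ρ - σ ^ 2)
      nlinarith
  have hC0 : 0 ≤ C := by
    have := abs_nonneg (ρ - σ ^ 2); have := abs_nonneg (γ - σ ^ 2)
    have := sq_nonneg K
    nlinarith
  have hnorm : ∀ p : ℝ × ℝ, ‖Fvec σ ρ γ l c K p‖ ≤ C := by
    intro p
    rw [Prod.norm_def]
    apply max_le <;> rw [Real.norm_eq_abs]
    · refine (comp_bound (m := ρ - σ ^ 2) hc hK (clK_nonneg K p.1) (clK_le K p.1 hK)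
        (hbarF_nonneg p hl0 hl1) (hbarF_le p hl0 hl1 hK)).trans ?_
      have := abs_nonneg (γ - σ ^ 2); have := sq_nonneg K
      nlinarith
    · refine (comp_bound (m := γ - σ ^ 2) hc hK (clK_nonneg K p.2) (clK_le K p.2 hK)
        (hbarF_nonneg p hl0 hl1) (hbarF_le p hl0 hl1 hK)).trans ?_
      have := abs_nonneg (ρ - σ ^ 2); have := sq_nonneg K
      nlinarith
  have hpl : IsPicardLindelof (fun _ : ℝ => Fvec σ ρ γ l c K) (tmin := 0) (tmax := T)
      ⟨0, le_rfl, hT.le⟩ ((1:ℝ), (1:ℝ))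
      (Real.toNNReal (C * T)) 0 (Real.toNNReal C) (Real.toNNReal L) := by
    constructor
    · intro t _
      apply LipschitzWith.lipschitzOnWith
      rw [lipschitzWith_iff_dist_le_mul]
      intro p q
      rw [Real.coe_toNNReal L hL0]
      exact hlip p q
    · exact fun x _ => continuousOn_const
    · exact fun t _ x _ => (hnorm x).trans (Real.le_coe_toNNReal C)
    · rw [Real.coe_toNNReal C hC0, Real.coe_toNNReal _ (mul_nonneg hC0 hT.le)]
      simp only [NNReal.coe_zero, sub_zero, sub_self, Subtype.coe_mk]
      rw [max_eq_left hT.le]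
  obtain ⟨f, hf0, hf⟩ := hpl.exists_eq_forall_mem_Icc_hasDerivWithinAt₀
  exact ⟨f, hf0, hf⟩

lemma step2_ineq (σ ρ γ l c a b x y : ℝ) (hc : 0 ≤ c) (hl0 : 0 ≤ l) (hl1 : l ≤ 1)
    (hρ : 0 < ρ) (hγ : 0 < γ) (ha : 0 ≤ a) (hb : 0 ≤ b) (hax : a ≤ x) (hby : b ≤ y) :
    l * (-((ρ - σ ^ 2) + 2 * c * (l * a + (1 - l) * b)) * a + c * (l * a + (1 - l) * b) ^ 2)
      + (1 - l) * (-((γ - σ ^ 2) + 2 * c * (l * a + (1 - l) * b)) * b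
          + c * (l * a + (1 - l) * b) ^ 2)
    ≤ (σ ^ 2 + 1) * (l * x + (1 - l) * y) + 0 := by
  have h1 : l * a + (1 - l) * b ≤ l * x + (1 - l) * y := by
    have := mul_le_mul_of_nonneg_left hax hl0
    have := mul_le_mul_of_nonneg_left hby (by linarith : (0:ℝ) ≤ 1 - l)
    linarith
  have h2 : 0 ≤ l * a + (1 - l) * b := by
    have := mul_nonneg hl0 ha
    have := mul_nonneg (by linarith : (0:ℝ) ≤ 1 - l) hb
    linarith
  nlinarith [mul_nonneg (sq_nonneg σ) (sub_nonneg.mpr h1),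
    mul_nonneg hc (sq_nonneg (l * a + (1 - l) * b)),
    mul_nonneg (mul_nonneg hl0 hρ.le) ha,
    mul_nonneg (mul_nonneg (by linarith : (0:ℝ) ≤ 1 - l) hγ.le) hb, h2.trans h1]

lemma step3_ineq (σ μ c a h x H : ℝ) (hc : 0 ≤ c) (hμ : 0 < μ) (ha : 0 ≤ a)
    (hax : a ≤ x) (hh : 0 ≤ h) (hH : h ≤ H) :
    -((μ - σ ^ 2) + 2 * c * h) * a + c * h ^ 2 ≤ (σ ^ 2 + 1) * x + c * H ^ 2 := by
  nlinarith [mul_nonneg hμ.le ha, mul_nonneg (mul_nonneg hc hh) ha,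
    mul_nonneg (sq_nonneg σ) (sub_nonneg.mpr hax),
    mul_nonneg hc (mul_nonneg (sub_nonneg.mpr hH) (by linarith : (0:ℝ) ≤ H + h)),
    ha.trans hax]


set_option maxHeartbeats 2000000 in
/-- existence of a nonnegative solution of the equilibrium
Riccati equation of the zero-sum game with non-constant discounting. -/
theorem ere_existence
    (T σ R ρ γ l : ℝ) (hT : 0 < T) (hR0 : 0 < R) (hR1 : R ≤ 1)
    (hρ : 0 < ρ) (hργ : ρ < γ) (hl0 : 0 < l) (hl1 : l < 1)
    (α : ℝ → ℝ)
    (hα : α = fun t : ℝ => l * Real.exp (-ρ * t) + (1 - l) * Real.exp (-γ * t)) :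
    ∃ P Ps : ℝ → ℝ → ℝ, IsERESolution T σ R α P Ps ∧
      ∀ t ∈ Set.Icc (0 : ℝ) T, ∀ s ∈ Set.Icc t T, 0 ≤ P t s := by
  subst hα
  have hγ0 : 0 < γ := hρ.trans hργ
  set c : ℝ := (1 - R) / R with hcdef
  have hc0 : 0 ≤ c := div_nonneg (by linarith) hR0.le
  set H : ℝ := exp ((σ ^ 2 + 1) * T) with hHdef
  have hH1 : 1 ≤ H := Real.one_le_exp (by positivity)
  have hσpos : (0:ℝ) < σ ^ 2 + 1 := by positivity
  set K : ℝ := H + c * H ^ 2 / (σ ^ 2 + 1) * (H - 1) with hKdef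
  have hq0 : 0 ≤ c * H ^ 2 / (σ ^ 2 + 1) := by positivity
  have hK1 : 1 ≤ K := by
    rw [hKdef]; nlinarith [mul_nonneg hq0 (by linarith : (0:ℝ) ≤ H - 1)]
  have hK0 : 0 ≤ K := by linarith
  have hgronK : ∀ τ ∈ Icc (0:ℝ) T, gronwallBound 1 (σ ^ 2 + 1) (c * H ^ 2) τ ≤ K := by
    intro τ hτ
    rw [gronwallBound_of_K_ne_0 hσpos.ne']
    have hexp : exp ((σ ^ 2 + 1) * τ) ≤ H := by
      rw [hHdef]
      exact exp_le_exp.mpr (mul_le_mul_of_nonneg_left hτ.2 hσpos.le)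
    have hexp1 : 1 ≤ exp ((σ ^ 2 + 1) * τ) :=
      Real.one_le_exp (mul_nonneg hσpos.le hτ.1)
    show 1 * exp ((σ ^ 2 + 1) * τ)
        + c * H ^ 2 / (σ ^ 2 + 1) * (exp ((σ ^ 2 + 1) * τ) - 1) ≤ K
    rw [hKdef]
    nlinarith [mul_nonneg hq0 (sub_nonneg.mpr hexp)]
  obtain ⟨f, hf0, hf⟩ := exists_ode_solution σ ρ γ l c K T hT hc0 hK0 hl0.le hl1.le
  set X : ℝ → ℝ := fun τ => (f τ).1 with hXdef
  set Y : ℝ → ℝ := fun τ => (f τ).2 with hYdef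
  set X' : ℝ → ℝ := fun τ => (Fvec σ ρ γ l c K (f τ)).1 with hX'def
  set Y' : ℝ → ℝ := fun τ => (Fvec σ ρ γ l c K (f τ)).2 with hY'def
  have hX0 : X 0 = 1 := by rw [hXdef]; simp [hf0]
  have hY0 : Y 0 = 1 := by rw [hYdef]; simp [hf0]
  have hXd : ∀ τ ∈ Icc (0:ℝ) T, HasDerivWithinAt X (X' τ) (Icc 0 T) τ := fun τ hτ =>
    (ContinuousLinearMap.fst ℝ ℝ ℝ).hasFDerivAt.comp_hasDerivWithinAt τ (hf τ hτ)
  have hYd : ∀ τ ∈ Icc (0:ℝ) T, HasDerivWithinAt Y (Y' τ) (Icc 0 T) τ := fun τ hτ =>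
    (ContinuousLinearMap.snd ℝ ℝ ℝ).hasFDerivAt.comp_hasDerivWithinAt τ (hf τ hτ)
  have hXc : ContinuousOn X (Icc 0 T) := fun τ hτ => (hXd τ hτ).continuousWithinAt
  have hYc : ContinuousOn Y (Icc 0 T) := fun τ hτ => (hYd τ hτ).continuousWithinAt
  -- Step 1 : nonnegativity
  have hXpos : ∀ τ ∈ Icc (0:ℝ) T, 0 ≤ X τ := by
    apply nonneg_of_deriv_cond hT.le hXc hXd (by rw [hX0]; norm_num)
    intro τ hτ hle
    have hcl : clK K (X τ) = 0 := clK_eq_zero K (X τ) hle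
    show (0:ℝ) ≤ (Fvec σ ρ γ l c K (f τ)).1
    unfold Fvec
    simp only
    rw [show (f τ).1 = X τ from rfl, hcl]
    nlinarith [mul_nonneg hc0 (sq_nonneg (hbarF l K (f τ)))]
  have hYpos : ∀ τ ∈ Icc (0:ℝ) T, 0 ≤ Y τ := by
    apply nonneg_of_deriv_cond hT.le hYc hYd (by rw [hY0]; norm_num)
    intro τ hτ hle
    have hcl : clK K (Y τ) = 0 := clK_eq_zero K (Y τ) hle
    show (0:ℝ) ≤ (Fvec σ ρ γ l c K (f τ)).2
    unfold Fvec
    simp only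
    rw [show (f τ).2 = Y τ from rfl, hcl]
    nlinarith [mul_nonneg hc0 (sq_nonneg (hbarF l K (f τ)))]
  -- Step 2 : bound the convex combination
  set W : ℝ → ℝ := fun τ => l * X τ + (1 - l) * Y τ with hWdef
  have hWd : ∀ τ ∈ Icc (0:ℝ) T, HasDerivWithinAt W (l * X' τ + (1 - l) * Y' τ) (Icc 0 T) τ :=
    fun τ hτ => ((hXd τ hτ).const_mul l).add ((hYd τ hτ).const_mul (1 - l))
  have hWc : ContinuousOn W (Icc 0 T) := fun τ hτ => (hWd τ hτ).continuousWithinAt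
  have hbar_eq : ∀ τ, hbarF l K (f τ) = l * clK K (X τ) + (1 - l) * clK K (Y τ) := fun τ => rfl
  have hX'eq : ∀ τ, X' τ
      = -((ρ - σ ^ 2) + 2 * c * hbarF l K (f τ)) * clK K (X τ) + c * (hbarF l K (f τ)) ^ 2 :=
    fun τ => rfl
  have hY'eq : ∀ τ, Y' τ
      = -((γ - σ ^ 2) + 2 * c * hbarF l K (f τ)) * clK K (Y τ) + c * (hbarF l K (f τ)) ^ 2 :=
    fun τ => rfl
  have hWH : ∀ τ ∈ Icc (0:ℝ) T, W τ ≤ H := by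
    have hgr := gronwall_scalar (δ := 1) (K := σ ^ 2 + 1) (ε := 0) hWc hWd
      (by rw [hWdef]; simp only; rw [hX0, hY0]; ring_nf; rfl) ?_
    · intro τ hτ
      refine (hgr τ hτ).trans ?_
      rw [gronwallBound_ε0, one_mul, hHdef]
      exact exp_le_exp.mpr (mul_le_mul_of_nonneg_left hτ.2 hσpos.le)
    · intro τ hτ
      rw [hX'eq τ, hY'eq τ, hbar_eq τ]
      rw [hWdef]
      simp only
      exact step2_ineq σ ρ γ l c (clK K (X τ)) (clK K (Y τ)) (X τ) (Y τ) hc0 hl0.le hl1.le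
        hρ hγ0 (clK_nonneg _ _) (clK_nonneg _ _)
        (clK_le_self K (X τ) (hXpos τ hτ)) (clK_le_self K (Y τ) (hYpos τ hτ))
  have hbarW : ∀ τ ∈ Icc (0:ℝ) T, hbarF l K (f τ) ≤ W τ := by
    intro τ hτ
    rw [hbar_eq τ, hWdef]
    simp only
    have h1 := mul_le_mul_of_nonneg_left (clK_le_self K (X τ) (hXpos τ hτ)) hl0.le
    have h2 := mul_le_mul_of_nonneg_left (clK_le_self K (Y τ) (hYpos τ hτ))
      (by linarith : (0:ℝ) ≤ 1 - l)
    linarith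
  -- Step 3 : upper bounds
  have hXK : ∀ τ ∈ Icc (0:ℝ) T, X τ ≤ K := by
    have hgr := gronwall_scalar (δ := 1) (K := σ ^ 2 + 1) (ε := c * H ^ 2) hXc hXd hX0.le ?_
    · exact fun τ hτ => (hgr τ hτ).trans (hgronK τ hτ)
    · intro τ hτ
      rw [hX'eq τ]
      exact step3_ineq σ ρ c (clK K (X τ)) (hbarF l K (f τ)) (X τ) H hc0 hρ
        (clK_nonneg _ _) (clK_le_self K (X τ) (hXpos τ hτ))
        (hbarF_nonneg (f τ) hl0.le hl1.le) ((hbarW τ hτ).trans (hWH τ hτ))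
  have hYK : ∀ τ ∈ Icc (0:ℝ) T, Y τ ≤ K := by
    have hgr := gronwall_scalar (δ := 1) (K := σ ^ 2 + 1) (ε := c * H ^ 2) hYc hYd hY0.le ?_
    · exact fun τ hτ => (hgr τ hτ).trans (hgronK τ hτ)
    · intro τ hτ
      rw [hY'eq τ]
      exact step3_ineq σ γ c (clK K (Y τ)) (hbarF l K (f τ)) (Y τ) H hc0 hγ0
        (clK_nonneg _ _) (clK_le_self K (Y τ) (hYpos τ hτ))
        (hbarF_nonneg (f τ) hl0.le hl1.le) ((hbarW τ hτ).trans (hWH τ hτ))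
  have hXcl : ∀ τ ∈ Icc (0:ℝ) T, clK K (X τ) = X τ :=
    fun τ hτ => clK_eq K (X τ) (hXpos τ hτ) (hXK τ hτ)
  have hYcl : ∀ τ ∈ Icc (0:ℝ) T, clK K (Y τ) = Y τ :=
    fun τ hτ => clK_eq K (Y τ) (hYpos τ hτ) (hYK τ hτ)
  -- Assemble the solution
  refine ⟨fun t s => l * exp (-ρ * (s - t)) * X (T - s)
      + (1 - l) * exp (-γ * (s - t)) * Y (T - s),
    fun t s => l * (exp (-ρ * (s - t)) * (-ρ * 1) * X (T - s)
        + exp (-ρ * (s - t)) * (X' (T - s) * (-1)))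
      + (1 - l) * (exp (-γ * (s - t)) * (-γ * 1) * Y (T - s)
        + exp (-γ * (s - t)) * (Y' (T - s) * (-1))),
    ⟨?_, ?_, ?_⟩, ?_⟩
  · -- continuity
    have hmaps : MapsTo (fun p : ℝ × ℝ => T - p.2)
        {p : ℝ × ℝ | 0 ≤ p.1 ∧ p.1 ≤ p.2 ∧ p.2 ≤ T} (Icc 0 T) := by
      intro p hp
      obtain ⟨h1, h2, h3⟩ := hp
      simp only [mem_Icc]
      constructor <;> linarith
    have hXT : ContinuousOn (fun p : ℝ × ℝ => X (T - p.2))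
        {p : ℝ × ℝ | 0 ≤ p.1 ∧ p.1 ≤ p.2 ∧ p.2 ≤ T} :=
      hXc.comp (Continuous.continuousOn (by fun_prop)) hmaps
    have hYT : ContinuousOn (fun p : ℝ × ℝ => Y (T - p.2))
        {p : ℝ × ℝ | 0 ≤ p.1 ∧ p.1 ≤ p.2 ∧ p.2 ≤ T} :=
      hYc.comp (Continuous.continuousOn (by fun_prop)) hmaps
    apply ContinuousOn.add
    · exact (Continuous.continuousOn
        (by fun_prop : Continuous fun p : ℝ × ℝ => l * exp (-ρ * (p.2 - p.1)))).mul hXT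
    · exact (Continuous.continuousOn
        (by fun_prop : Continuous fun p : ℝ × ℝ => (1 - l) * exp (-γ * (p.2 - p.1)))).mul hYT
  · -- ODE
    intro t ht s hs
    have hmaps : MapsTo (fun u : ℝ => T - u) (Icc t T) (Icc 0 T) := by
      intro u hu
      simp only [mem_Icc]
      constructor <;> linarith [hu.1, hu.2, ht.1]
    have hTs : T - s ∈ Icc (0:ℝ) T := hmaps hs
    constructor
    · have hG1 : HasDerivWithinAt (fun u : ℝ => X (T - u)) (X' (T - s) * (-1)) (Icc t T) s := by
        have hinner : HasDerivWithinAt (fun u : ℝ => T - u) (-1) (Icc t T) s :=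
          (hasDerivWithinAt_id s (Icc t T)).const_sub T
        exact HasDerivWithinAt.comp s (hXd (T - s) hTs) hinner hmaps
      have hG2 : HasDerivWithinAt (fun u : ℝ => Y (T - u)) (Y' (T - s) * (-1)) (Icc t T) s := by
        have hinner : HasDerivWithinAt (fun u : ℝ => T - u) (-1) (Icc t T) s :=
          (hasDerivWithinAt_id s (Icc t T)).const_sub T
        exact HasDerivWithinAt.comp s (hYd (T - s) hTs) hinner hmaps
      have hE1 : HasDerivWithinAt (fun u : ℝ => exp (-ρ * (u - t)))
          (exp (-ρ * (s - t)) * (-ρ * 1)) (Icc t T) s :=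
        (((hasDerivWithinAt_id s (Icc t T)).sub_const t).const_mul (-ρ)).exp
      have hE2 : HasDerivWithinAt (fun u : ℝ => exp (-γ * (u - t)))
          (exp (-γ * (s - t)) * (-γ * 1)) (Icc t T) s :=
        (((hasDerivWithinAt_id s (Icc t T)).sub_const t).const_mul (-γ)).exp
      have h1 := ((hE1.const_mul l).mul hG1).add ((hE2.const_mul (1 - l)).mul hG2)
      refine h1.congr_deriv ?_
      beta_reduce
      ring
    · have h1 := hX'eq (T - s)
      have h2 := hY'eq (T - s)
      rw [hbar_eq (T - s), hXcl (T - s) hTs, hYcl (T - s) hTs] at h1 h2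
      show l * (exp (-ρ * (s - t)) * (-ρ * 1) * X (T - s)
            + exp (-ρ * (s - t)) * (X' (T - s) * (-1)))
          + (1 - l) * (exp (-γ * (s - t)) * (-γ * 1) * Y (T - s)
            + exp (-γ * (s - t)) * (Y' (T - s) * (-1)))
          + (σ ^ 2 - 2 * ((1 - R) / R) * (l * exp (-ρ * (s - s)) * X (T - s)
            + (1 - l) * exp (-γ * (s - s)) * Y (T - s)))
          * (l * exp (-ρ * (s - t)) * X (T - s) + (1 - l) * exp (-γ * (s - t)) * Y (T - s))
          + (l * exp (-ρ * (s - t)) + (1 - l) * exp (-γ * (s - t)))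
          * (((1 - R) / R) * (l * exp (-ρ * (s - s)) * X (T - s)
            + (1 - l) * exp (-γ * (s - s)) * Y (T - s)) ^ 2) = 0
      rw [← hcdef]
      simp only [sub_self, mul_zero, exp_zero]
      rw [h1, h2]
      ring
  · -- terminal condition
    intro t ht
    show l * exp (-ρ * (T - t)) * X (T - T) + (1 - l) * exp (-γ * (T - t)) * Y (T - T)
        = l * exp (-ρ * (T - t)) + (1 - l) * exp (-γ * (T - t))
    rw [sub_self, hX0, hY0]
    ring
  · -- nonnegativity
    intro t ht s hs
    have hTs : T - s ∈ Icc (0:ℝ) T := ⟨by linarith [hs.2], by linarith [hs.1, ht.1]⟩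
    have h1 := hXpos (T - s) hTs
    have h2 := hYpos (T - s) hTs
    have e1 := (exp_pos (-ρ * (s - t))).le
    have e2 := (exp_pos (-γ * (s - t))).le
    show 0 ≤ l * exp (-ρ * (s - t)) * X (T - s) + (1 - l) * exp (-γ * (s - t)) * Y (T - s)
    have := mul_nonneg (mul_nonneg hl0.le e1) h1
    have := mul_nonneg (mul_nonneg (by linarith : (0:ℝ) ≤ 1 - l) e2) h2
    linarith
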